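/- Let U ⊆ ℝ^m be open, and let Π^{ij} : U → ℝ (1 ≤ i,j ≤ m) be differentiable functions with Π^{ij} = −Π^{ji}, and H_{ijk} : U → ℝ totally antisymmetric functions, satisfying the twisted Jacobi identity Σ_l (Π^{il} ∂_l Π^{jk} + Π^{jl} ∂_l Π^{ki} + Π^{kl} ∂_l Π^{ij}) = Σ_{l,n,r} Π^{il} Π^{jn} Π^{kr} H_{lnr} for all i,j,k. Define Christoffel symbols Γ^{ij}_k := ∂_k Π^{ij} − (1/2) Σ_{l,n} Π^{il} Π^{jn} H_{kln}. Then the twisted Poisson tensor Π is parallel for the contravariant connection with these symbols: for all n,i,j, Σ_l Π^{nl} ∂_l Π^{ij} − Σ_l Γ^{ni}_l Π^{lj} − Σ_l Γ^{nj}_l Π^{il} = 0 on U. -/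

import Mathlib

/-- The `l`-th partial derivative of a function `f : ℝ^m → ℝ`. -/
noncomputable def pd {m : ℕ} (l : Fin m) (f : (Fin m → ℝ) → ℝ) (x : Fin m → ℝ) : ℝ :=
  fderiv ℝ f x (Pi.single l 1)

/-- The Christoffel symbols `Γ^{ij}_k := ∂_k Π^{ij} − (1/2) Σ_{l,n} Π^{il} Π^{jn} H_{kln}`
of the canonical local contravariant connection on a twisted Poisson manifold. -/
noncomputable def Gamma {m : ℕ} (P : Fin m → Fin m → (Fin m → ℝ) → ℝ)
    (H : Fin m → Fin m → Fin m → (Fin m → ℝ) → ℝ)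
    (i j kk : Fin m) (x : Fin m → ℝ) : ℝ :=
  pd kk (P i j) x - (1 / 2) * ∑ l, ∑ n, P i l x * P j n x * H kk l n x

private lemma cyc3 {m : ℕ} (f : Fin m → Fin m → Fin m → ℝ) :
    (∑ l, ∑ a, ∑ b, f l a b) = ∑ l, ∑ a, ∑ b, f b l a := by
  rw [Finset.sum_comm]
  exact Finset.sum_congr rfl fun a _ => Finset.sum_comm

private lemma swap3 {m : ℕ} (f : Fin m → Fin m → Fin m → ℝ) :
    (∑ l, ∑ a, ∑ b, f l a b) = ∑ l, ∑ a, ∑ b, f a l b :=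
  Finset.sum_comm

/-- Let `U ⊆ ℝ^m` be open, `Π^{ij}` differentiable antisymmetric
functions and `H_{ijk}` totally antisymmetric functions on `U` satisfying the twisted
Jacobi identity. Then the twisted Poisson tensor `Π` is parallel for the contravariant
connection with symbols `Γ^{ij}_k = ∂_k Π^{ij} − (1/2) Σ Π^{il} Π^{jn} H_{kln}`:
`∇^n Π^{ij} = Σ_l Π^{nl} ∂_l Π^{ij} − Σ_l Γ^{ni}_l Π^{lj} − Σ_l Γ^{nj}_l Π^{il} = 0`
on `U`. -/
theorem stmt_17 {m : ℕ} (U : Set (Fin m → ℝ)) (hU : IsOpen U)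
    (P : Fin m → Fin m → (Fin m → ℝ) → ℝ)
    (H : Fin m → Fin m → Fin m → (Fin m → ℝ) → ℝ)
    (hdiff : ∀ i j, ∀ x ∈ U, DifferentiableAt ℝ (P i j) x)
    (hPanti : ∀ i j, ∀ x ∈ U, P i j x = - P j i x)
    (hHanti1 : ∀ i j kk, ∀ x ∈ U, H i j kk x = - H j i kk x)
    (hHanti2 : ∀ i j kk, ∀ x ∈ U, H i j kk x = - H i kk j x)
    (hJac : ∀ i j kk, ∀ x ∈ U,
      (∑ l, (P i l x * pd l (P j kk) x + P j l x * pd l (P kk i) x +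
        P kk l x * pd l (P i j) x)) =
      ∑ l, ∑ n, ∑ r, P i l x * P j n x * P kk r x * H l n r x) :
    ∀ n i j, ∀ x ∈ U,
      (∑ l, P n l x * pd l (P i j) x) - (∑ l, Gamma P H n i l x * P l j x) -
        (∑ l, Gamma P H n j l x * P i l x) = 0 := by
  intro n i j x hx
  have hP : ∀ a b, P a b x = - P b a x := fun a b => hPanti a b x hx
  have hpd : ∀ a b l, pd l (P a b) x = - pd l (P b a) x := by
    intro a b l
    have heq : P a b =ᶠ[nhds x] fun y => -(P b a y) := by
      filter_upwards [hU.mem_nhds hx] with y hy using hPanti a b y hy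
    unfold pd
    rw [heq.fderiv_eq, fderiv_fun_neg]
    simp
  have hH : ∀ a b c, H a b c x = H b c a x := by
    intro a b c
    rw [hHanti1 a b c x hx, hHanti2 b a c x hx]
    ring_nf
  have hjac := hJac n i j x hx
  rw [Finset.sum_add_distrib, Finset.sum_add_distrib] at hjac
  have eB : (∑ l, Gamma P H n i l x * P l j x) =
      (∑ l, pd l (P n i) x * P l j x) -
      (1/2) * (∑ l, ∑ a, ∑ b, P n a x * P i b x * H l a b x * P l j x) := by
    simp only [Gamma, sub_mul]
    rw [Finset.sum_sub_distrib]
    congr 1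
    rw [Finset.mul_sum]
    refine Finset.sum_congr rfl fun l _ => ?_
    rw [mul_assoc, Finset.sum_mul]
    congr 1
    refine Finset.sum_congr rfl fun a _ => ?_
    rw [Finset.sum_mul]
  have eC : (∑ l, Gamma P H n j l x * P i l x) =
      (∑ l, pd l (P n j) x * P i l x) -
      (1/2) * (∑ l, ∑ a, ∑ b, P n a x * P j b x * H l a b x * P i l x) := by
    simp only [Gamma, sub_mul]
    rw [Finset.sum_sub_distrib]
    congr 1
    rw [Finset.mul_sum]
    refine Finset.sum_congr rfl fun l _ => ?_
    rw [mul_assoc, Finset.sum_mul]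
    congr 1
    refine Finset.sum_congr rfl fun a _ => ?_
    rw [Finset.sum_mul]
  have h1 : (∑ l, pd l (P n i) x * P l j x) = -(∑ l, P j l x * pd l (P n i) x) := by
    rw [← Finset.sum_neg_distrib]
    exact Finset.sum_congr rfl fun l _ => by rw [hP l j]; ring
  have h2 : (∑ l, pd l (P n j) x * P i l x) = -(∑ l, P i l x * pd l (P j n) x) := by
    rw [← Finset.sum_neg_distrib]
    exact Finset.sum_congr rfl fun l _ => by rw [hpd n j l]; ring
  have hS1 : (∑ l, ∑ a, ∑ b, P n a x * P i b x * H l a b x * P l j x) =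
      -(∑ l, ∑ a, ∑ b, P n l x * P i a x * P j b x * H l a b x) := by
    rw [cyc3, ← Finset.sum_neg_distrib]
    refine Finset.sum_congr rfl fun l _ => ?_
    rw [← Finset.sum_neg_distrib]
    refine Finset.sum_congr rfl fun a _ => ?_
    rw [← Finset.sum_neg_distrib]
    refine Finset.sum_congr rfl fun b _ => ?_
    rw [hP b j, hH b l a]
    ring
  have hS2 : (∑ l, ∑ a, ∑ b, P n a x * P j b x * H l a b x * P i l x) =
      -(∑ l, ∑ a, ∑ b, P n l x * P i a x * P j b x * H l a b x) := by
    rw [swap3, ← Finset.sum_neg_distrib]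
    refine Finset.sum_congr rfl fun l _ => ?_
    rw [← Finset.sum_neg_distrib]
    refine Finset.sum_congr rfl fun a _ => ?_
    rw [← Finset.sum_neg_distrib]
    refine Finset.sum_congr rfl fun b _ => ?_
    rw [hHanti1 a l b x hx]
    ring
  rw [eB, eC, h1, h2, hS1, hS2]
  linarith [hjac]
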